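/- Let T = {T_1,...,T_r} be a regular chain in K[U][X] and H ∈ K[U][X] with res(H, T) ≠ 0 (so [T, H] is a regular system). Then the set V_{K̄(U)}(T \ H), i.e., the common zeros of T in the algebraic closure of K(U) at which H does not vanish, is nonempty. -/

import Mathlib

open MvPolynomial

noncomputable section

variable {K : Type*} [Field K] {d n : ℕ}

/-- Specialization of parameters: `K[U][X] → K̄[X]` substituting `a` for `U`. -/
def specAt (a : Fin d → AlgebraicClosure K) :
    MvPolynomial (Fin n) (MvPolynomial (Fin d) K) →+*
      MvPolynomial (Fin n) (AlgebraicClosure K) :=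
  MvPolynomial.map ((MvPolynomial.aeval a).toRingHom)

/-- Common zero set in `K̄ⁿ` of the specializations at `a` of a set of polynomials. -/
def zeroSetAt (a : Fin d → AlgebraicClosure K)
    (S : Set (MvPolynomial (Fin n) (MvPolynomial (Fin d) K))) :
    Set (Fin n → AlgebraicClosure K) :=
  {x | ∀ f ∈ S, MvPolynomial.eval x (specAt a f) = 0}

variable {A : Type*} [CommRing A]

/-- The main (largest) variable of a multivariate polynomial (defaults to `0`). -/
def mainVar [NeZero n] (F : MvPolynomial (Fin n) A) : Fin n := WithBot.unbotD 0 F.vars.max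

/-- The initial of `F`: its leading coefficient w.r.t. its main variable. -/
def initial [NeZero n] (F : MvPolynomial (Fin n) A) : MvPolynomial (Fin n) A :=
  ∑ m ∈ F.support.filter (fun m => m (mainVar F) = F.degreeOf (mainVar F)),
    MvPolynomial.monomial (m - Finsupp.single (mainVar F) (F.degreeOf (mainVar F))) (F.coeff m)

/-- `F` viewed as a univariate polynomial in the variable `j`. -/
def toUniv (j : Fin n) (F : MvPolynomial (Fin n) A) :
    Polynomial (MvPolynomial (Fin n) A) :=
  ∑ m ∈ F.support,
    Polynomial.monomial (m j) (MvPolynomial.monomial (m - Finsupp.single j (m j)) (F.coeff m))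

/-- The Sylvester matrix of two univariate polynomials. -/
def sylvester (f g : Polynomial A) :
    Matrix (Fin (f.natDegree + g.natDegree)) (Fin (f.natDegree + g.natDegree)) A :=
  fun i j =>
    if (i : ℕ) < g.natDegree then
      (if (i : ℕ) ≤ (j : ℕ) ∧ (j : ℕ) ≤ (i : ℕ) + f.natDegree then
        f.coeff (f.natDegree + i - j) else 0)
    else
      (if (i : ℕ) - g.natDegree ≤ (j : ℕ) ∧ (j : ℕ) ≤ ((i : ℕ) - g.natDegree) + g.natDegree then
        g.coeff (g.natDegree + ((i : ℕ) - g.natDegree) - j) else 0)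

/-- The resultant of two univariate polynomials (Sylvester determinant). -/
def resultant (f g : Polynomial A) : A := (sylvester f g).det

/-- `res(F, P)`: resultant w.r.t. the main variable of `P`. -/
def res1 [NeZero n] (F P : MvPolynomial (Fin n) A) : MvPolynomial (Fin n) A :=
  resultant (toUniv (mainVar P) F) (toUniv (mainVar P) P)

/-- Successive resultant of `F` w.r.t. the list `l` of polynomials. -/
def sres [NeZero n] (F : MvPolynomial (Fin n) A) (l : List (MvPolynomial (Fin n) A)) :
    MvPolynomial (Fin n) A :=
  l.foldl res1 F

/-- A triangular set: the main variables are strictly increasing. -/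
def IsTriangular [NeZero n] {r : ℕ} (T : Fin r → MvPolynomial (Fin n) A) : Prop :=
  (∀ i, (T i).vars.Nonempty) ∧ StrictMono (fun i => mainVar (T i))

/-- A regular chain. -/
def IsRegularChain [NeZero n] {r : ℕ} (T : Fin r → MvPolynomial (Fin n) A) : Prop :=
  IsTriangular T ∧ (∀ i : Fin r, (i : ℕ) = 0 → initial (T i) ≠ 0) ∧
    ∀ i : Fin r, 0 < (i : ℕ) →
      sres (initial (T i)) ((List.ofFn T).take i).reverse ≠ 0
section RowSum

variable {R B : Type*} [CommRing R] [CommRing B]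

lemma row_sum_zero (ψ : R →+* B) (f : Polynomial R) (α : B)
    (hf : Polynomial.eval α (f.map ψ) = 0) (i N : ℕ) (hiN : i + f.natDegree + 1 ≤ N) :
    ∑ j ∈ Finset.range N,
      (if i ≤ j ∧ j ≤ i + f.natDegree then ψ (f.coeff (f.natDegree + i - j)) else 0)
        * α ^ (N - 1 - j) = 0 := by
  have h1 : ∀ j ∈ Finset.range N,
      (if i ≤ j ∧ j ≤ i + f.natDegree then ψ (f.coeff (f.natDegree + i - j)) else 0)
          * α ^ (N - 1 - j)
      = (if i ≤ j ∧ j ≤ i + f.natDegree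
          then ψ (f.coeff (f.natDegree + i - j)) * α ^ (N - 1 - j) else 0) := by
    intro j _; split <;> simp
  rw [Finset.sum_congr rfl h1, ← Finset.sum_filter]
  have h2 : ∑ j ∈ (Finset.range N).filter (fun j => i ≤ j ∧ j ≤ i + f.natDegree),
      ψ (f.coeff (f.natDegree + i - j)) * α ^ (N - 1 - j)
      = ∑ t ∈ Finset.range (f.natDegree + 1),
          ψ (f.coeff t) * α ^ ((N - 1 - i - f.natDegree) + t) := by
    refine Finset.sum_nbij' (fun j => f.natDegree + i - j) (fun t => f.natDegree + i - t)
      ?_ ?_ ?_ ?_ ?_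
    · intro a ha; simp only [Finset.mem_filter, Finset.mem_range] at ha ⊢; omega
    · intro a ha; simp only [Finset.mem_filter, Finset.mem_range] at ha ⊢; omega
    · intro a ha; simp only [Finset.mem_filter, Finset.mem_range] at ha; omega
    · intro a ha; simp only [Finset.mem_range] at ha; omega
    · intro a ha; simp only [Finset.mem_filter, Finset.mem_range] at ha
      rw [show N - 1 - i - f.natDegree + (f.natDegree + i - a) = N - 1 - a by omega]
  rw [h2]
  have h3 : ∀ t ∈ Finset.range (f.natDegree + 1),
      ψ (f.coeff t) * α ^ ((N - 1 - i - f.natDegree) + t)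
      = α ^ (N - 1 - i - f.natDegree) * (ψ (f.coeff t) * α ^ t) := by
    intro t _; rw [pow_add]; ring
  rw [Finset.sum_congr rfl h3, ← Finset.mul_sum]
  have h4 : ∑ t ∈ Finset.range (f.natDegree + 1), ψ (f.coeff t) * α ^ t
      = Polynomial.eval α (f.map ψ) := by
    rw [Polynomial.eval_eq_sum_range'
      (lt_of_le_of_lt Polynomial.natDegree_map_le (Nat.lt_succ_self f.natDegree))]
    exact Finset.sum_congr rfl fun t _ => by rw [Polynomial.coeff_map]
  rw [h4, hf, mul_zero]

lemma map_resultant_eq_zero (ψ : R →+* B) {f g : Polynomial R}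
    (hN : 0 < f.natDegree + g.natDegree) (α : B)
    (hf : Polynomial.eval α (f.map ψ) = 0) (hg : Polynomial.eval α (g.map ψ) = 0) :
    ψ (resultant f g) = 0 := by
  set M : Matrix (Fin (f.natDegree + g.natDegree)) (Fin (f.natDegree + g.natDegree)) B :=
    ψ.mapMatrix (sylvester f g) with hM
  set v : Fin (f.natDegree + g.natDegree) → B :=
    fun j => α ^ (f.natDegree + g.natDegree - 1 - (j : ℕ)) with hv
  have hMv : M.mulVec v = 0 := by
    funext i
    have hiN := i.isLt
    show ∑ j, M i j * v j = 0
    by_cases hi : (i : ℕ) < g.natDegree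
    · calc ∑ j, M i j * v j
          = ∑ j ∈ Finset.range (f.natDegree + g.natDegree),
            (if (i : ℕ) ≤ j ∧ j ≤ (i : ℕ) + f.natDegree
              then ψ (f.coeff (f.natDegree + (i : ℕ) - j)) else 0)
              * α ^ (f.natDegree + g.natDegree - 1 - j) := by
            rw [← Fin.sum_univ_eq_sum_range]
            refine Finset.sum_congr rfl fun j _ => ?_
            simp only [hM, RingHom.mapMatrix_apply, Matrix.map_apply, sylvester, if_pos hi,
              apply_ite ψ, map_zero, hv]
        _ = 0 := row_sum_zero ψ f α hf (i : ℕ) _ (by omega)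
    · calc ∑ j, M i j * v j
          = ∑ j ∈ Finset.range (f.natDegree + g.natDegree),
            (if (i : ℕ) - g.natDegree ≤ j ∧ j ≤ ((i : ℕ) - g.natDegree) + g.natDegree
              then ψ (g.coeff (g.natDegree + ((i : ℕ) - g.natDegree) - j)) else 0)
              * α ^ (f.natDegree + g.natDegree - 1 - j) := by
            rw [← Fin.sum_univ_eq_sum_range]
            refine Finset.sum_congr rfl fun j _ => ?_
            simp only [hM, RingHom.mapMatrix_apply, Matrix.map_apply, sylvester, if_neg hi,
              apply_ite ψ, map_zero, hv]
        _ = 0 := row_sum_zero ψ g α hg ((i : ℕ) - g.natDegree) _ (by omega)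
  have hdet : M.det • v = 0 := by
    have h5 : M.adjugate.mulVec (M.mulVec v) = M.det • v := by
      rw [Matrix.mulVec_mulVec, Matrix.adjugate_mul, Matrix.smul_mulVec, Matrix.one_mulVec]
    rw [← h5, hMv, Matrix.mulVec_zero]
  have hlast : M.det = 0 := by
    have h6 := congrFun hdet ⟨f.natDegree + g.natDegree - 1, by omega⟩
    simpa [hv, Nat.sub_self] using h6
  rw [resultant, RingHom.map_det]
  exact hlast

end RowSum

section MV

variable {R B : Type*} [CommRing R] [CommRing B] [NeZero n]

lemma prod_update (x : Fin n → B) (c : Fin n) (α : B) (m : Fin n →₀ ℕ) :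
    (∏ i ∈ m.support, (Function.update x c α) i ^ m i)
      = α ^ m c * ∏ i ∈ m.support.erase c, x i ^ m i := by
  by_cases hc : c ∈ m.support
  · rw [← Finset.mul_prod_erase _ _ hc, Function.update_self]
    congr 1
    exact Finset.prod_congr rfl fun i hi => by
      rw [Function.update_of_ne (Finset.ne_of_mem_erase hi)]
  · rw [Finsupp.notMem_support_iff.mp hc, pow_zero, one_mul, Finset.erase_eq_of_notMem hc]
    exact Finset.prod_congr rfl fun i hi => by
      rw [Function.update_of_ne (by rintro rfl; exact hc hi)]

lemma sub_single_eq_erase (c : Fin n) (m : Fin n →₀ ℕ) :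
    m - Finsupp.single c (m c) = m.erase c := by
  ext i
  rcases eq_or_ne i c with rfl | h
  · simp [Finsupp.tsub_apply]
  · simp [Finsupp.tsub_apply, Finsupp.single_apply, (Ne.symm h), Finsupp.erase_ne h]

lemma toUniv_eval (φ : R →+* B) (x : Fin n → B) (c : Fin n) (α : B)
    (F : MvPolynomial (Fin n) R) :
    MvPolynomial.eval₂ φ (Function.update x c α) F
      = Polynomial.eval α ((toUniv c F).map (MvPolynomial.eval₂Hom φ x)) := by
  rw [Polynomial.eval_map, toUniv, Polynomial.eval₂_finset_sum, MvPolynomial.eval₂_eq]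
  refine Finset.sum_congr rfl fun m hm => ?_
  rw [Polynomial.eval₂_monomial, MvPolynomial.eval₂Hom_monomial, sub_single_eq_erase,
    Finsupp.prod, Finsupp.support_erase]
  have h1 : ∀ i ∈ m.support.erase c, x i ^ (m.erase c) i = x i ^ m i := fun i hi => by
    rw [Finsupp.erase_ne (Finset.ne_of_mem_erase hi)]
  rw [Finset.prod_congr rfl h1, prod_update]
  ring

lemma mainVar_mem {F : MvPolynomial (Fin n) R} (h : F.vars.Nonempty) : mainVar F ∈ F.vars := by
  rw [mainVar, ← Finset.coe_max' h, WithBot.unbotD_coe]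
  exact F.vars.max'_mem h

lemma le_mainVar {F : MvPolynomial (Fin n) R} {v : Fin n} (hv : v ∈ F.vars) : v ≤ mainVar F := by
  rw [mainVar, ← Finset.coe_max' ⟨v, hv⟩, WithBot.unbotD_coe]
  exact Finset.le_max' _ v hv

lemma toUniv_eq_C {F : MvPolynomial (Fin n) R} {c : Fin n} (h : c ∉ F.vars) :
    toUniv c F = Polynomial.C F := by
  have hc : ∀ m ∈ F.support, m c = 0 := by
    intro m hm
    by_contra h0
    exact h ((MvPolynomial.mem_vars c).mpr ⟨m, hm, Finsupp.mem_support_iff.mpr h0⟩)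
  rw [toUniv]
  have h1 : ∀ m ∈ F.support,
      Polynomial.monomial (m c)
        (MvPolynomial.monomial (m - Finsupp.single c (m c)) (F.coeff m))
      = Polynomial.C (MvPolynomial.monomial m (F.coeff m)) := by
    intro m hm
    rw [hc m hm, Finsupp.single_zero, tsub_zero, Polynomial.monomial_zero_left]
  rw [Finset.sum_congr rfl h1, ← map_sum, MvPolynomial.support_sum_monomial_coeff]

lemma toUniv_coeff_degreeOf (F : MvPolynomial (Fin n) R) :
    (toUniv (mainVar F) F).coeff (F.degreeOf (mainVar F)) = initial F := by
  rw [toUniv, Polynomial.finset_sum_coeff, initial, Finset.sum_filter]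
  refine Finset.sum_congr rfl fun m _ => ?_
  rw [Polynomial.coeff_monomial]
  split_ifs with h
  · rw [h]
  · rfl

lemma one_le_degreeOf {F : MvPolynomial (Fin n) R} {c : Fin n} (h : c ∈ F.vars) :
    1 ≤ F.degreeOf c := by
  obtain ⟨m, hm, hcm⟩ := (MvPolynomial.mem_vars c).mp h
  calc 1 ≤ m c := Nat.one_le_iff_ne_zero.mpr (Finsupp.mem_support_iff.mp hcm)
    _ ≤ _ := by rw [MvPolynomial.degreeOf_eq_sup]; exact Finset.le_sup (f := fun m => m c) hm

end MV

section Main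

variable {R L : Type*} [CommRing R] [IsDomain R] [Field L] [IsAlgClosed L] [Infinite L]

set_option linter.unusedSectionVars false

lemma main_aux [NeZero n] (φ : R →+* L) (hφ : Function.Injective φ) :
    ∀ (r : ℕ) (T : Fin r → MvPolynomial (Fin n) R), IsRegularChain T →
      ∀ Hs : List (MvPolynomial (Fin n) R),
        (∀ Hk ∈ Hs, sres Hk (List.ofFn T).reverse ≠ 0) →
        ∃ x : Fin n → L, (∀ i, MvPolynomial.eval₂ φ x (T i) = 0) ∧
          ∀ Hk ∈ Hs, MvPolynomial.eval₂ φ x Hk ≠ 0 := by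
  intro r
  induction r with
  | zero =>
      intro T _ Hs hHs
      have h0 : (0 : MvPolynomial (Fin n) R) ∉ Hs := by
        intro h
        exact hHs 0 h (by simp [sres, List.ofFn_zero])
      have hPne : (MvPolynomial.map φ) Hs.prod ≠ 0 := fun h =>
        List.prod_ne_zero h0 (MvPolynomial.map_injective φ hφ (by simpa using h))
      have hex : ∃ x : Fin n → L, MvPolynomial.eval x (MvPolynomial.map φ Hs.prod) ≠ 0 := by
        by_contra hall
        push_neg at hall
        exact hPne (MvPolynomial.funext (q := 0) fun x => by simp [hall x])
      obtain ⟨x, hx⟩ := hex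
      refine ⟨x, fun i => i.elim0, fun Hk hk h0' => hx ?_⟩
      rw [MvPolynomial.eval_map]
      have hprod : MvPolynomial.eval₂ φ x Hs.prod
          = (Hs.map (MvPolynomial.eval₂ φ x)).prod := by
        have := map_list_prod (MvPolynomial.eval₂Hom φ x) Hs
        simpa using this
      rw [hprod]
      exact List.prod_eq_zero (by
        refine List.mem_map.mpr ⟨Hk, hk, h0'⟩)
  | succ r IH =>
      intro T hT Hs hHs
      have hofn : List.ofFn T = (List.ofFn (fun i : Fin r => T i.castSucc)).concat
          (T (Fin.last r)) := List.ofFn_succ' T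
      set Tl := T (Fin.last r) with hTldef
      set T' : Fin r → MvPolynomial (Fin n) R := fun i => T i.castSucc with hT'def
      set c := mainVar Tl with hcdef
      have hrev : (List.ofFn T).reverse = Tl :: (List.ofFn T').reverse := by
        rw [hofn, List.concat_eq_append, List.reverse_concat]
      have htake : (List.ofFn T).take r = List.ofFn T' := by
        rw [hofn, List.concat_eq_append]
        simpa using List.take_left (List.ofFn T') [Tl]
      have hchain' : IsRegularChain T' := by
        obtain ⟨⟨hv, hmono⟩, h0, hs⟩ := hT
        refine ⟨⟨fun i => hv _, fun i j hij => hmono (Fin.castSucc_lt_castSucc_iff.mpr hij)⟩,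
          ?_, ?_⟩
        · intro i hi
          exact h0 i.castSucc (by simpa using hi)
        · intro i hi
          have hres := hs i.castSucc (by simpa using hi)
          have htk : (List.ofFn T).take (i : ℕ) = (List.ofFn T').take (i : ℕ) := by
            rw [hofn, List.concat_eq_append,
              List.take_append_of_le_length (by simp [i.isLt.le])]
          simp only [Fin.coe_castSucc] at hres
          rwa [htk] at hres
      have htop : sres (initial Tl) (List.ofFn T').reverse ≠ 0 := by
        rcases Nat.eq_zero_or_pos r with hr | hr
        · subst hr
          have h1 := hT.2.1 (Fin.last 0) rfl
          simpa [sres, List.ofFn_zero, hTldef] using h1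
        · have h1 := hT.2.2 (Fin.last r) (by simpa using hr)
          rwa [show ((Fin.last r : Fin (r + 1)) : ℕ) = r from rfl, htake] at h1
      have hHs'cond : ∀ Hk ∈ (initial Tl :: Hs.map (fun Hk => res1 Hk Tl)),
          sres Hk (List.ofFn T').reverse ≠ 0 := by
        intro Hk hk
        rcases List.mem_cons.mp hk with rfl | hk
        · exact htop
        · obtain ⟨Hk0, h0, rfl⟩ := List.mem_map.mp hk
          have h1 := hHs Hk0 h0
          rw [hrev] at h1
          simpa [sres] using h1
      obtain ⟨x', hx'T, hx'H⟩ := IH T' hchain' _ hHs'cond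
      have hInit : MvPolynomial.eval₂ φ x' (initial Tl) ≠ 0 := by
        have := hx'H _ List.mem_cons_self
        simpa using this
      have hRes : ∀ Hk ∈ Hs, MvPolynomial.eval₂ φ x' (res1 Hk Tl) ≠ 0 := fun Hk hk => by
        have := hx'H _ (List.mem_cons_of_mem _ (List.mem_map_of_mem hk))
        simpa using this
      set ψ : MvPolynomial (Fin n) R →+* L := MvPolynomial.eval₂Hom φ x' with hψdef
      set g : Polynomial (MvPolynomial (Fin n) R) := toUniv c Tl with hgdef
      have hvars : Tl.vars.Nonempty := hT.1.1 (Fin.last r)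
      have hD1 : 1 ≤ Tl.degreeOf c := one_le_degreeOf (mainVar_mem hvars)
      have hcoeffD : (g.map ψ).coeff (Tl.degreeOf c) = ψ (initial Tl) := by
        rw [Polynomial.coeff_map, hgdef, hcdef, toUniv_coeff_degreeOf]
      have hginit : initial Tl ≠ 0 := fun h => hInit (by simp [h])
      have hdegg : 1 ≤ g.natDegree :=
        le_trans hD1 (Polynomial.le_natDegree_of_ne_zero
          (by rw [hgdef, hcdef, toUniv_coeff_degreeOf]; exact hginit))
      have hdeggL : 1 ≤ (g.map ψ).natDegree :=
        le_trans hD1 (Polynomial.le_natDegree_of_ne_zero (by rw [hcoeffD]; exact hInit))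
      obtain ⟨α, hα⟩ := IsAlgClosed.exists_root (g.map ψ) (by
        intro hdeg
        have h0 : (g.map ψ).natDegree = 0 := by
          rw [Polynomial.natDegree, hdeg]; rfl
        omega)
      have hEval : ∀ F : MvPolynomial (Fin n) R,
          MvPolynomial.eval₂ φ (Function.update x' c α) F
            = Polynomial.eval α ((toUniv c F).map ψ) :=
        fun F => toUniv_eval φ x' c α F
      refine ⟨Function.update x' c α, ?_, ?_⟩
      · intro i
        refine Fin.lastCases ?_ ?_ i
        · rw [hEval]; exact hα
        · intro j
          have hvnot : c ∉ (T j.castSucc).vars := by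
            intro hmem
            have h1 : mainVar (T j.castSucc) < c := by
              rw [hcdef, hTldef]
              exact hT.1.2 (Fin.castSucc_lt_last j)
            exact absurd (le_mainVar hmem) (not_le.mpr h1)
          rw [hEval, toUniv_eq_C hvnot, Polynomial.map_C, Polynomial.eval_C]
          exact hx'T j
      · intro Hk hk h0
        apply hRes Hk hk
        have h1 : ψ (resultant (toUniv c Hk) g) = 0 := by
          refine map_resultant_eq_zero ψ (by omega) α ?_ ?_
          · rw [← hEval]; exact h0
          · exact hα
        rw [res1, ← hcdef, ← hgdef]
        exact h1

end Main

/-- Evaluation of `F ∈ K[U][X]` at a point `x` with coordinates in the algebraic closure of the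
rational function field `K(U)`. -/
def evalGeneric (x : Fin n → AlgebraicClosure (FractionRing (MvPolynomial (Fin d) K)))
    (F : MvPolynomial (Fin n) (MvPolynomial (Fin d) K)) :
    AlgebraicClosure (FractionRing (MvPolynomial (Fin d) K)) :=
  MvPolynomial.eval x (MvPolynomial.map
    ((algebraMap (FractionRing (MvPolynomial (Fin d) K))
        (AlgebraicClosure (FractionRing (MvPolynomial (Fin d) K)))).comp
      (algebraMap (MvPolynomial (Fin d) K) (FractionRing (MvPolynomial (Fin d) K)))) F)

/-- If `[T, H]` is a regular system in `K[U][X]` (i.e. `T` is a regular chain and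
`res(H, T) ≠ 0`), then `V_{K̄(U)}(T \ H)` is nonempty: `T` has a common zero over the algebraic
closure of `K(U)` at which `H` does not vanish. -/
theorem stmt9 [NeZero n] {r : ℕ}
    (T : Fin r → MvPolynomial (Fin n) (MvPolynomial (Fin d) K))
    (H : MvPolynomial (Fin n) (MvPolynomial (Fin d) K))
    (hT : IsRegularChain T)
    (hres : sres H (List.ofFn T).reverse ≠ 0) :
    ∃ x : Fin n → AlgebraicClosure (FractionRing (MvPolynomial (Fin d) K)),
      (∀ i, evalGeneric x (T i) = 0) ∧ evalGeneric x H ≠ 0 := by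
  have hφ : Function.Injective
      ((algebraMap (FractionRing (MvPolynomial (Fin d) K))
          (AlgebraicClosure (FractionRing (MvPolynomial (Fin d) K)))).comp
        (algebraMap (MvPolynomial (Fin d) K) (FractionRing (MvPolynomial (Fin d) K)))) :=
    (algebraMap (FractionRing (MvPolynomial (Fin d) K))
        (AlgebraicClosure (FractionRing (MvPolynomial (Fin d) K)))).injective.comp
      (IsFractionRing.injective _ _)
  obtain ⟨x, h1, h2⟩ := main_aux _ hφ r T hT [H]
    (by intro Hk hk; rw [List.mem_singleton] at hk; subst hk; exact hres)
  refine ⟨x, fun i => ?_, fun h => ?_⟩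
  · rw [evalGeneric, MvPolynomial.eval_map]
    exact h1 i
  · refine h2 H (List.mem_singleton_self H) ?_
    rw [evalGeneric, MvPolynomial.eval_map] at h
    exact h


end
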